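/- Let I be a nonempty finite index set, let K : I → ℝ with K_i > 0 for all i ∈ I, let Y : I → ℝ be injective, let D : I → {0, 1}, and fix real numbers 0 ≤ t ≤ t_horizon. Assume there exists j ∈ I with Y_j > t_horizon. For s ∈ ℝ define the hazard estimate ĝ(s) := (∑_{i∈I} K_i·D_i·1{Y_i = s}) / (∑_{i∈I} K_i·1{Y_i ≥ s}) (with the convention 0/0 = 0), the at-risk weight d_K^+(s) := ∑_{j∈I} K_j·1{Y_j > s}, the set of death times T := {Y_i : i ∈ I, D_i = 1}, and the survival estimate Ŝ(t) := ∏_{s ∈ T, s ≤ t} (1 − ĝ(s)). Then Ŝ(t) = ∏_{i∈I} ( d_K^+(Y_i) / (K_i + d_K^+(Y_i)) )^{D_i·1{Y_i ≤ t}}, and moreover Ŝ(t) > 0. -/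

import Mathlib

open Finset

/-- Convenient product form of the truncated-kernel Kaplan–Meier estimator. With positive kernel
weights `K i`, no ties among the observed times `Y i` (injectivity), event indicators
`D i ∈ {0, 1}`, and some observed time exceeding the horizon `t_horizon ≥ t`, the survival
estimate `Ŝ(t) = ∏_{s ∈ T, s ≤ t} (1 - ĝ(s))` (product over death times up to `t`) equals
`∏_i (d_K⁺(Y i) / (K i + d_K⁺(Y i)))^(D i · 1{Y i ≤ t})`, and is strictly positive. -/
theorem kernel_kaplan_meier_product_form
    {I : Type*} [Fintype I] [Nonempty I] [DecidableEq I]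
    (K Y D : I → ℝ) (hK : ∀ i, 0 < K i) (hY : Function.Injective Y)
    (hD : ∀ i, D i = 0 ∨ D i = 1)
    (t thorizon : ℝ) (ht0 : 0 ≤ t) (ht : t ≤ thorizon)
    (hrisk : ∃ j, thorizon < Y j)
    (g : ℝ → ℝ)
    (hg : ∀ s, g s = (∑ i, K i * D i * (if Y i = s then 1 else 0)) /
                     (∑ i, K i * (if s ≤ Y i then 1 else 0)))
    (dK : ℝ → ℝ) (hdK : ∀ s, dK s = ∑ j, K j * (if s < Y j then 1 else 0))
    (T : Finset ℝ) (hT : T = (Finset.univ.filter fun i => D i = 1).image Y)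
    (S : ℝ) (hS : S = ∏ s ∈ T.filter (fun s => s ≤ t), (1 - g s)) :
    S = ∏ i, (dK (Y i) / (K i + dK (Y i))) ^ (D i * (if Y i ≤ t then 1 else 0)) ∧
    0 < S := by
  obtain ⟨j0, hj0⟩ := hrisk
  -- denominator of g at Y i
  have hden : ∀ i, (∑ j, K j * (if Y i ≤ Y j then 1 else 0)) = K i + dK (Y i) := by
    intro i
    rw [hdK]
    have h : ∀ j, K j * (if Y i ≤ Y j then 1 else 0)
        = (if j = i then K i else 0) + K j * (if Y i < Y j then 1 else 0) := by
      intro j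
      by_cases h : j = i
      · subst h; simp
      · have hne : Y i ≠ Y j := fun e => h (hY e.symm)
        by_cases h2 : Y i ≤ Y j
        · have h3 : Y i < Y j := lt_of_le_of_ne h2 hne
          simp [h, h2, h3]
        · have h3 : ¬ Y i < Y j := fun hl => h2 hl.le
          simp [h, h2, h3]
    simp_rw [h, Finset.sum_add_distrib, Finset.sum_ite_eq' Finset.univ i]
    simp
  -- numerator of g at Y i
  have hnum : ∀ i, (∑ j, K j * D j * (if Y j = Y i then 1 else 0)) = K i * D i := by
    intro i
    rw [Finset.sum_eq_single i]
    · simp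
    · intro j _ hj
      have : Y j ≠ Y i := fun e => hj (hY e)
      simp [this]
    · simp
  have hdKpos : ∀ i, Y i ≤ t → 0 < dK (Y i) := by
    intro i hi
    rw [hdK]
    apply Finset.sum_pos'
    · intro j _
      by_cases h : Y i < Y j <;> simp [h, (hK j).le]
    · refine ⟨j0, Finset.mem_univ _, ?_⟩
      have h : Y i < Y j0 := lt_of_le_of_lt (hi.trans ht) hj0
      simp [h, hK j0]
  have hfac : ∀ i, Y i ≤ t → D i = 1 → 1 - g (Y i) = dK (Y i) / (K i + dK (Y i)) := by
    intro i hit hDi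
    have hd := hdKpos i hit
    have hpos : 0 < K i + dK (Y i) := by linarith [hK i]
    rw [hg, hnum, hden, hDi, mul_one]
    field_simp
    ring
  set A := Finset.univ.filter (fun i => D i = 1 ∧ Y i ≤ t) with hA
  have hTfilt : T.filter (fun s => s ≤ t) = A.image Y := by
    rw [hT, hA]
    ext s
    simp only [Finset.mem_filter, Finset.mem_image, Finset.mem_univ, true_and]
    constructor
    · rintro ⟨⟨i, h1, h2⟩, h3⟩; exact ⟨i, ⟨h1, h2 ▸ h3⟩, h2⟩
    · rintro ⟨i, ⟨h1, h2⟩, h3⟩; exact ⟨⟨i, h1, h3⟩, h3 ▸ h2⟩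
  have hSA : S = ∏ i ∈ A, dK (Y i) / (K i + dK (Y i)) := by
    rw [hS, hTfilt, Finset.prod_image (fun a _ b _ h => hY h)]
    refine Finset.prod_congr rfl ?_
    intro i hi
    rw [hA, Finset.mem_filter] at hi
    exact hfac i hi.2.2 hi.2.1
  have hRHS : (∏ i, (dK (Y i) / (K i + dK (Y i))) ^ (D i * (if Y i ≤ t then 1 else 0)))
      = ∏ i ∈ A, dK (Y i) / (K i + dK (Y i)) := by
    rw [hA, Finset.prod_filter]
    refine Finset.prod_congr rfl ?_
    intro i _
    by_cases h1 : D i = 1 ∧ Y i ≤ t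
    · rw [if_pos h1, h1.1, if_pos h1.2, one_mul, Real.rpow_one]
    · rw [if_neg h1]
      have hz : D i * (if Y i ≤ t then 1 else 0) = 0 := by
        rcases hD i with h | h
        · simp [h]
        · have h2 : ¬ Y i ≤ t := fun hle => h1 ⟨h, hle⟩
          simp [h2]
      rw [hz, Real.rpow_zero]
  constructor
  · rw [hSA, hRHS]
  · rw [hSA]
    apply Finset.prod_pos
    intro i hi
    rw [hA, Finset.mem_filter] at hi
    have hd := hdKpos i hi.2.2
    have hpos : 0 < K i + dK (Y i) := by linarith [hK i]
    positivity
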